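/- Viewed as a polynomial in α, b_m(α) = (1/m)·∫_{α−1}^{α}(x + 1/2 − α)·∏_{k=0}^{m−1}(k+x) dx has degree m−1 with leading coefficient 1/12, i.e., the coefficient of α^{m−1} equals 1/12, and the coefficient of α^{m−2} equals (1/12)·binomial(m−1, 2). -/

import Mathlib

noncomputable def binetB (m : ℕ) (α : ℝ) : ℝ :=
  (1 / (m : ℝ)) * ∫ x in (α - 1)..α, (x + 1/2 - α) * ∏ k ∈ Finset.range m, ((k : ℝ) + x)

open Polynomial Finset

noncomputable def binetP (m : ℕ) : Polynomial ℝ := ∏ k ∈ Finset.range m, (X + C (k:ℝ))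

noncomputable def wgt (j : ℕ) : ℝ := j / (2*(j+1)*(j+2))

noncomputable def binetPoly (m : ℕ) : Polynomial ℝ :=
  C (1/(m:ℝ)) * ∑ j ∈ Finset.range (m+1),
    C (wgt j) * (Polynomial.taylor (-1) (Polynomial.hasseDeriv j (binetP m)))

lemma binetP_monic (m : ℕ) : (binetP m).Monic :=
  monic_prod_of_monic _ _ fun k _ => monic_X_add_C _

lemma binetP_natDegree (m : ℕ) : (binetP m).natDegree = m := by
  rw [binetP, natDegree_prod]
  · have h : ∀ x:ℕ, (X + ((x:ℕ):ℝ[X])).natDegree = 1 := fun x => by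
      rw [← map_natCast (C (R:=ℝ))]; exact natDegree_X_add_C _
    simp [h]
  · intro k _; exact (monic_X_add_C _).ne_zero

lemma binetP_coeff_top (m : ℕ) : (binetP m).coeff m = 1 := by
  have := (binetP_monic m).coeff_natDegree
  rwa [binetP_natDegree] at this

lemma binetP_coeff_sub_one (m : ℕ) (hm : 1 ≤ m) :
    (binetP m).coeff (m-1) = (m : ℝ) * ((m:ℝ) - 1) / 2 := by
  have h0 : 0 < (binetP m).natDegree := by rw [binetP_natDegree]; omega
  have h1 : (binetP m).coeff (m-1) = (binetP m).nextCoeff := by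
    rw [nextCoeff_of_natDegree_pos h0, binetP_natDegree]
  rw [h1, binetP, Monic.nextCoeff_prod _ _ (fun k _ => monic_X_add_C _)]
  simp only [nextCoeff_X_add_C]
  have h2 : (∑ k ∈ Finset.range m, (k:ℝ)) * 2 = (m:ℝ) * ((m:ℝ) - 1) := by
    have h3 := congrArg (Nat.cast (R := ℝ)) (Finset.sum_range_id_mul_two m)
    push_cast [Nat.cast_sub hm] at h3
    exact h3
  linarith

lemma hasse_zero {p : Polynomial ℝ} {n : ℕ} (h : p.natDegree < n) :
    Polynomial.hasseDeriv n p = 0 := by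
  ext i
  rw [hasseDeriv_coeff, coeff_eq_zero_of_natDegree_lt (lt_of_lt_of_le h (Nat.le_add_left n i)),
    mul_zero, coeff_zero]

lemma hasse_top (m : ℕ) : (Polynomial.hasseDeriv m (binetP m)).eval (-1) = 1 := by
  rw [eval_eq_sum_range' (n := 1)
    (by rw [natDegree_hasseDeriv, binetP_natDegree]; omega)]
  simp [hasseDeriv_coeff, binetP_coeff_top]

lemma hasse_sub_one (m : ℕ) (hm : 1 ≤ m) :
    (Polynomial.hasseDeriv (m-1) (binetP m)).eval (-1)
      = (m:ℝ) * ((m:ℝ) - 1) / 2 - m := by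
  have hd : (Polynomial.hasseDeriv (m-1) (binetP m)).natDegree < 2 := by
    rw [natDegree_hasseDeriv, binetP_natDegree]; omega
  rw [eval_eq_sum_range' hd]
  rw [Finset.sum_range_succ, Finset.sum_range_one]
  rw [hasseDeriv_coeff, hasseDeriv_coeff]
  have h1 : 0 + (m-1) = m - 1 := by omega
  have h2 : 1 + (m-1) = m := by omega
  rw [h1, h2, binetP_coeff_sub_one m hm, binetP_coeff_top]
  have h3 : (m-1).choose (m-1) = 1 := Nat.choose_self _
  have h4 : m.choose (m-1) = m := by
    have := Nat.choose_symm (n := m) (k := 1) hm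
    rw [this, Nat.choose_one_right]
  rw [h3, h4]
  push_cast
  ring

lemma binetPoly_coeff (m k : ℕ) :
    (binetPoly m).coeff k = (1/(m:ℝ)) * ∑ j ∈ Finset.range (m+1),
      wgt j * (((k+j).choose k : ℝ) * (Polynomial.hasseDeriv (k+j) (binetP m)).eval (-1)) := by
  rw [binetPoly, coeff_C_mul, finset_sum_coeff]
  congr 1
  refine Finset.sum_congr rfl fun j _ => ?_
  rw [coeff_C_mul, taylor_coeff]
  congr 1
  have h := LinearMap.congr_fun (Polynomial.hasseDeriv_comp (R := ℝ) k j) (binetP m)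
  simp only [LinearMap.comp_apply, LinearMap.smul_apply] at h
  rw [h, eval_smul, nsmul_eq_mul]

lemma wgt_zero : wgt 0 = 0 := by simp [wgt]
lemma wgt_one : wgt 1 = 1/12 := by norm_num [wgt]
lemma wgt_two : wgt 2 = 1/12 := by norm_num [wgt]

lemma binetPoly_coeff_eq_zero (m k : ℕ) (hk : m ≤ k) : (binetPoly m).coeff k = 0 := by
  rw [binetPoly_coeff, Finset.sum_eq_zero, mul_zero]
  intro j hj
  rcases Nat.eq_zero_or_pos j with h | h
  · subst h; simp [wgt_zero]
  · rw [hasse_zero (by rw [binetP_natDegree]; omega), eval_zero, mul_zero, mul_zero]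

lemma binetPoly_coeff_main (m : ℕ) (hm : 1 ≤ m) : (binetPoly m).coeff (m-1) = 1/12 := by
  rw [binetPoly_coeff, Finset.sum_eq_single 1]
  · have h1 : m - 1 + 1 = m := by omega
    rw [h1, hasse_top, wgt_one]
    have h4 : m.choose (m-1) = m := by
      have := Nat.choose_symm (n := m) (k := 1) hm
      rw [this, Nat.choose_one_right]
    rw [h4]
    have hm0 : (m:ℝ) ≠ 0 := Nat.cast_ne_zero.mpr (by omega)
    field_simp
  · intro j hj hne
    rcases Nat.eq_zero_or_pos j with h | h
    · subst h; simp [wgt_zero]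
    · have h2 : 2 ≤ j := by omega
      rw [hasse_zero (by rw [binetP_natDegree]; omega), eval_zero, mul_zero, mul_zero]
  · intro h; exact absurd (Finset.mem_range.mpr (by omega)) h

lemma binetPoly_coeff_snd (m : ℕ) (hm : 2 ≤ m) :
    (binetPoly m).coeff (m-2) = (1/12) * (((m-1).choose 2 : ℕ) : ℝ) := by
  rw [binetPoly_coeff]
  have hsub : ({1, 2} : Finset ℕ) ⊆ Finset.range (m+1) := by
    intro x hx; simp at hx; rcases hx with h | h <;> simp [h] <;> omega
  rw [← Finset.sum_subset hsub (by
    intro j hj hj2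
    simp only [Finset.mem_insert, Finset.mem_singleton, not_or] at hj2
    rcases Nat.eq_zero_or_pos j with h | h
    · subst h; simp [wgt_zero]
    · have h3 : 3 ≤ j := by omega
      rw [hasse_zero (by rw [binetP_natDegree]; omega), eval_zero, mul_zero, mul_zero])]
  rw [Finset.sum_pair (by norm_num : (1:ℕ) ≠ 2)]
  have e1 : m - 2 + 1 = m - 1 := by omega
  have e2 : m - 2 + 2 = m := by omega
  rw [e1, e2, hasse_top, hasse_sub_one m (by omega), wgt_one, wgt_two]
  have c1 : (m-1).choose (m-2) = m - 1 := by
    have h : m - 2 = (m-1) - 1 := by omega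
    rw [h, Nat.choose_symm (by omega : 1 ≤ m - 1), Nat.choose_one_right]
  have c2 : m.choose (m-2) = m.choose 2 := by
    have h : m - 2 = m - 2 := rfl
    exact Nat.choose_symm hm
  rw [c1, c2, Nat.cast_choose_two, Nat.cast_choose_two]
  have hm0 : (m:ℝ) ≠ 0 := Nat.cast_ne_zero.mpr (by omega)
  have hc1 : ((m-1 : ℕ) : ℝ) = (m:ℝ) - 1 := by
    rw [Nat.cast_sub (by omega)]; norm_num
  rw [hc1]
  field_simp
  ring

lemma key_integral (j : ℕ) : ∫ u in (0:ℝ)..1, (u - 1/2) * u^j = wgt j := by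
  have h1 : ∀ u : ℝ, (u - 1/2) * u^j = u^(j+1) - (1/2) * u^j := fun u => by ring
  simp only [h1]
  rw [intervalIntegral.integral_sub ((continuous_pow _).intervalIntegrable _ _)
    ((by fun_prop : Continuous fun u : ℝ => (1/2:ℝ) * u^j).intervalIntegrable _ _),
    intervalIntegral.integral_const_mul, integral_pow, integral_pow]
  have hj1 : ((j:ℝ) + 1) ≠ 0 := by positivity
  have hj2 : ((j:ℝ) + 1 + 1) ≠ 0 := by positivity
  rw [wgt]
  push_cast
  field_simp
  ring

lemma shift_integral (α : ℝ) (j : ℕ) :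
    ∫ x in (α-1)..α, (x + 1/2 - α) * (x - (α-1))^j = wgt j := by
  have h := intervalIntegral.integral_comp_sub_right (a := α-1) (b := α)
    (fun u => (u - 1/2) * u^j) (α-1)
  have e1 : α - 1 - (α - 1) = 0 := by ring
  have e2 : α - (α - 1) = 1 := by ring
  rw [e1, e2] at h
  have h2 : ∀ x : ℝ, (x - (α-1) - 1/2) * (x - (α-1))^j
      = (x + 1/2 - α) * (x - (α-1))^j := fun x => by ring
  simp only [h2] at h
  rw [h, key_integral]

lemma taylor_expand (m : ℕ) (x r : ℝ) :
    (binetP m).eval x = ∑ j ∈ Finset.range (m+1),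
      (Polynomial.hasseDeriv j (binetP m)).eval r * (x - r)^j := by
  have h1 : (binetP m).eval x = (Polynomial.taylor r (binetP m)).eval (x - r) := by
    rw [taylor_apply, eval_comp]; simp
  rw [h1, eval_eq_sum_range' (n := m+1)
    (by rw [natDegree_taylor, binetP_natDegree]; omega)]
  exact Finset.sum_congr rfl fun j _ => by rw [taylor_coeff]

lemma binetB_eq_eval (m : ℕ) (α : ℝ) : binetB m α = (binetPoly m).eval α := by
  have hprod : ∀ x : ℝ, ∏ k ∈ Finset.range m, ((k:ℝ) + x) = (binetP m).eval x := by
    intro x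
    rw [binetP, eval_prod]
    exact Finset.prod_congr rfl fun k _ => by simp [add_comm]
  have hint : ∀ x : ℝ, (x + 1/2 - α) * ∏ k ∈ Finset.range m, ((k:ℝ) + x)
      = ∑ j ∈ Finset.range (m+1),
          (Polynomial.hasseDeriv j (binetP m)).eval (α-1) * ((x + 1/2 - α) * (x - (α-1))^j) := by
    intro x
    rw [hprod, taylor_expand m x (α-1), Finset.mul_sum]
    exact Finset.sum_congr rfl fun j _ => by ring
  rw [binetB]
  simp only [hint]
  rw [intervalIntegral.integral_finset_sum (fun j _ => by
    apply Continuous.intervalIntegrable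
    fun_prop)]
  simp only [intervalIntegral.integral_const_mul, shift_integral]
  rw [binetPoly, eval_mul, eval_C, eval_finset_sum]
  congr 1
  refine Finset.sum_congr rfl fun j _ => ?_
  rw [eval_mul, eval_C, taylor_apply, eval_comp]
  simp only [eval_add, eval_X, eval_C]
  rw [show α + (-1) = α - 1 by ring]
  ring

theorem binetB_polynomial_coeffs (m : ℕ) (hm : 1 ≤ m) :
    ∃ p : Polynomial ℝ,
      (∀ α : ℝ, binetB m α = p.eval α) ∧
      p.natDegree = m - 1 ∧
      p.coeff (m - 1) = 1/12 ∧
      (2 ≤ m → p.coeff (m - 2) = (1/12) * ((m - 1).choose 2 : ℝ)) := by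
  refine ⟨binetPoly m, binetB_eq_eval m, ?_, binetPoly_coeff_main m hm,
    fun h2 => binetPoly_coeff_snd m h2⟩
  apply le_antisymm
  · rw [Polynomial.natDegree_le_iff_coeff_eq_zero]
    intro N hN
    exact binetPoly_coeff_eq_zero m N (by omega)
  · apply Polynomial.le_natDegree_of_ne_zero
    rw [binetPoly_coeff_main m hm]
    norm_num
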